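/- Let (M,F) be an AR-Finsler manifold. The mean Cartan torsion satisfies I_i = a^{jk}∂̇_i a_{jk} + n·∂̇_i log η; in particular I_i is a rational function in y, independently of whether η is rational in y. -/

import Mathlib

def IsRat {n : ℕ} (U : Set (Fin n → ℝ)) (f : (Fin n → ℝ) → ℝ) : Prop :=
  ∃ P Q : MvPolynomial (Fin n) ℝ, Q ≠ 0 ∧
    ∀ y ∈ U, f y * MvPolynomial.eval y Q = MvPolynomial.eval y P

noncomputable def pd {n : ℕ} (i : Fin n) (f : (Fin n → ℝ) → ℝ) (y : Fin n → ℝ) : ℝ :=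
  fderiv ℝ f y (Pi.single i 1)

open MvPolynomial

variable {n : ℕ} {U : Set (Fin n → ℝ)}

theorem hasFDerivAt_eval (P : MvPolynomial (Fin n) ℝ) (y : Fin n → ℝ) :
    HasFDerivAt (fun z => eval z P)
      (∑ j, eval y (pderiv j P) • ContinuousLinearMap.proj (R := ℝ) (φ := fun _ : Fin n => ℝ) j)
      y := by
  induction P using MvPolynomial.induction_on with
  | C c =>
      simp only [eval_C, map_zero, pderiv_C, zero_smul, Finset.sum_const_zero]
      exact hasFDerivAt_const _ _
  | add p q hp hq =>
      have := hp.add hq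
      simp only [map_add, eval_add, Pi.add_def] at this ⊢
      refine this.congr_fderiv ?_; symm
      rw [← Finset.sum_add_distrib]
      exact Finset.sum_congr rfl fun j _ => add_smul _ _ _
  | mul_X p i hp =>
      have hXi : HasFDerivAt (fun z : Fin n → ℝ => z i)
          (ContinuousLinearMap.proj (R := ℝ) (φ := fun _ : Fin n => ℝ) i) y :=
        (ContinuousLinearMap.proj (R := ℝ) (φ := fun _ : Fin n => ℝ) i).hasFDerivAt
      have := hp.mul hXi
      simp only [eval_mul, eval_X, Pi.mul_def] at this ⊢
      refine this.congr_fderiv ?_; symm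
      ext v
      simp only [ContinuousLinearMap.sum_apply, ContinuousLinearMap.smul_apply,
        ContinuousLinearMap.proj_apply, ContinuousLinearMap.add_apply, smul_eq_mul]
      rw [Finset.sum_congr rfl (g := fun j =>
          eval y (pderiv j p) * y i * v j + (if i = j then eval y p * v j else 0)) ?_]
      · rw [Finset.sum_add_distrib, Finset.sum_ite_eq, if_pos (Finset.mem_univ i)]
        rw [add_comm]
        congr 1
        rw [Finset.mul_sum]
        exact Finset.sum_congr rfl fun j _ => by ring
      · intro j _
        rw [pderiv_mul]
        simp only [map_add, map_mul, eval_X, pderiv_X, Pi.single_apply]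
        split_ifs with h <;> simp <;> ring

theorem differentiable_eval (P : MvPolynomial (Fin n) ℝ) :
    Differentiable ℝ (fun z : Fin n → ℝ => eval z P) :=
  fun y => (hasFDerivAt_eval P y).differentiableAt

theorem pd_eval (i : Fin n) (P : MvPolynomial (Fin n) ℝ) (y : Fin n → ℝ) :
    pd i (fun z => eval z P) y = eval y (pderiv i P) := by
  rw [pd, (hasFDerivAt_eval P y).fderiv]
  simp [Pi.single_apply, Finset.sum_ite_eq]

theorem eq_zero_of_eval (hU : IsOpen U) (hne : U.Nonempty) {Q : MvPolynomial (Fin n) ℝ}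
    (h : ∀ y ∈ U, eval y Q = 0) : Q = 0 := by
  obtain ⟨y0, hy0⟩ := hne
  have han : AnalyticOnNhd ℝ (fun z : Fin n → ℝ => eval z Q) Set.univ := by
    have := AnalyticOnNhd.eval_continuousLinearMap
      (ContinuousLinearMap.id ℝ (Fin n → ℝ)) Q
    simpa using this
  have hz : (fun z : Fin n → ℝ => eval z Q) =ᶠ[nhds y0] 0 := by
    filter_upwards [hU.mem_nhds hy0] with z hz using h z hz
  have := han.eqOn_zero_of_preconnected_of_eventuallyEq_zero isPreconnected_univ
    (Set.mem_univ y0) hz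
  apply MvPolynomial.funext
  intro x
  simpa using this (Set.mem_univ x)

theorem IsRat.congr {f g : (Fin n → ℝ) → ℝ} (h : IsRat U f) (hg : ∀ y ∈ U, f y = g y) :
    IsRat U g := by
  obtain ⟨P, Q, hQ, hPQ⟩ := h
  exact ⟨P, Q, hQ, fun y hy => by rw [← hg y hy]; exact hPQ y hy⟩

theorem isRat_const (c : ℝ) : IsRat U (fun _ => c) :=
  ⟨C c, 1, one_ne_zero, fun y _ => by simp⟩

theorem IsRat.add {f g : (Fin n → ℝ) → ℝ} (hf : IsRat U f) (hg : IsRat U g) :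
    IsRat U (fun y => f y + g y) := by
  obtain ⟨P1, Q1, hQ1, h1⟩ := hf
  obtain ⟨P2, Q2, hQ2, h2⟩ := hg
  refine ⟨P1 * Q2 + P2 * Q1, Q1 * Q2, mul_ne_zero hQ1 hQ2, fun y hy => ?_⟩
  simp only [map_add, map_mul]
  linear_combination eval y Q2 * h1 y hy + eval y Q1 * h2 y hy

theorem IsRat.mul {f g : (Fin n → ℝ) → ℝ} (hf : IsRat U f) (hg : IsRat U g) :
    IsRat U (fun y => f y * g y) := by
  obtain ⟨P1, Q1, hQ1, h1⟩ := hf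
  obtain ⟨P2, Q2, hQ2, h2⟩ := hg
  refine ⟨P1 * P2, Q1 * Q2, mul_ne_zero hQ1 hQ2, fun y hy => ?_⟩
  simp only [map_mul]
  calc f y * g y * (eval y Q1 * eval y Q2) = (f y * eval y Q1) * (g y * eval y Q2) := by ring
    _ = eval y P1 * eval y P2 := by rw [h1 y hy, h2 y hy]

theorem IsRat.neg {f : (Fin n → ℝ) → ℝ} (hf : IsRat U f) : IsRat U (fun y => -f y) := by
  obtain ⟨P, Q, hQ, h⟩ := hf
  exact ⟨-P, Q, hQ, fun y hy => by simp [← h y hy]⟩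

theorem IsRat.sub {f g : (Fin n → ℝ) → ℝ} (hf : IsRat U f) (hg : IsRat U g) :
    IsRat U (fun y => f y - g y) := by
  have := hf.add hg.neg
  simpa [sub_eq_add_neg] using this

theorem isRat_sum {ι : Type*} (s : Finset ι) (f : ι → (Fin n → ℝ) → ℝ)
    (h : ∀ i ∈ s, IsRat U (f i)) : IsRat U (fun y => ∑ i ∈ s, f i y) := by
  classical
  induction s using Finset.induction_on with
  | empty => simpa using isRat_const 0
  | insert a s hx ih =>
      simp only [Finset.sum_insert hx]
      exact (h a (Finset.mem_insert_self a s)).add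
        (ih fun i hi => h i (Finset.mem_insert_of_mem hi))

theorem isRat_prod {ι : Type*} (s : Finset ι) (f : ι → (Fin n → ℝ) → ℝ)
    (h : ∀ i ∈ s, IsRat U (f i)) : IsRat U (fun y => ∏ i ∈ s, f i y) := by
  classical
  induction s using Finset.induction_on with
  | empty => simpa using isRat_const 1
  | insert a s hx ih =>
      simp only [Finset.prod_insert hx]
      exact (h a (Finset.mem_insert_self a s)).mul
        (ih fun i hi => h i (Finset.mem_insert_of_mem hi))

theorem isRat_pd (hU : IsOpen U) {f : (Fin n → ℝ) → ℝ} (hfd : Differentiable ℝ f)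
    (h : IsRat U f) (i : Fin n) : IsRat U (pd i f) := by
  obtain ⟨P, Q, hQ, hPQ⟩ := h
  refine ⟨pderiv i P * Q - P * pderiv i Q, Q * Q, mul_ne_zero hQ hQ, fun y hy => ?_⟩
  have hev : (fun z => f z * eval z Q) =ᶠ[nhds y] (fun z => eval z P) := by
    filter_upwards [hU.mem_nhds hy] with z hz using hPQ z hz
  have hfd' : fderiv ℝ (fun z => f z * eval z Q) y = fderiv ℝ (fun z => eval z P) y :=
    hev.fderiv_eq
  have hmul : fderiv ℝ (fun z => f z * eval z Q) y =
      f y • fderiv ℝ (fun z => eval z Q) y + eval y Q • fderiv ℝ f y :=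
    fderiv_mul (hfd y) ((differentiable_eval Q) y)
  have key : pd i f y * eval y Q + f y * pd i (fun z => eval z Q) y
      = pd i (fun z => eval z P) y := by
    simp only [pd]
    rw [← hfd', hmul]
    simp only [ContinuousLinearMap.add_apply, ContinuousLinearMap.smul_apply, smul_eq_mul]
    ring
  rw [pd_eval, pd_eval] at key
  simp only [map_sub, map_mul]
  linear_combination eval y Q * key - eval y (pderiv i Q) * hPQ y hy


theorem isRat_det (M : Fin n → Fin n → (Fin n → ℝ) → ℝ) (hM : ∀ i j, IsRat U (M i j)) :
    IsRat U (fun y => Matrix.det (Matrix.of fun i j => M i j y)) := by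
  have hdet : ∀ y : Fin n → ℝ, Matrix.det (Matrix.of fun i j => M i j y)
      = ∑ σ : Equiv.Perm (Fin n), ((Equiv.Perm.sign σ : ℤ) : ℝ) * ∏ p, M (σ p) p y := by
    intro y; rw [Matrix.det_apply']; rfl
  refine IsRat.congr (f := fun y => ∑ σ : Equiv.Perm (Fin n),
      ((Equiv.Perm.sign σ : ℤ) : ℝ) * ∏ p, M (σ p) p y) ?_ (fun y _ => (hdet y).symm)
  exact isRat_sum _ _ fun σ _ =>
    (isRat_const _).mul (isRat_prod _ _ fun p _ => hM (σ p) p)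

theorem isRat_adjugate (M : Fin n → Fin n → (Fin n → ℝ) → ℝ) (hM : ∀ i j, IsRat U (M i j))
    (i k : Fin n) :
    IsRat U (fun y => Matrix.adjugate (Matrix.of fun p q => M p q y) i k) := by
  classical
  set N : Fin n → Fin n → (Fin n → ℝ) → ℝ :=
    fun p q z => if p = k then Pi.single (M := fun _ : Fin n => ℝ) i 1 q else M p q z with hNdef
  have hN : ∀ p q, IsRat U (N p q) := by
    intro p q
    by_cases h : p = k
    · simp only [hNdef, h, if_true]; exact isRat_const _
    · simp only [hNdef, h, if_false]; exact hM p q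
  have hrw : ∀ y : Fin n → ℝ, Matrix.adjugate (Matrix.of fun p q => M p q y) i k
      = Matrix.det (Matrix.of fun p q => N p q y) := by
    intro y
    rw [Matrix.adjugate_apply]
    congr 1
    ext p q
    by_cases h : p = k <;> simp [hNdef, Matrix.updateRow_apply, h]
  exact (isRat_det N hN).congr fun y _ => (hrw y).symm

/-- For an AR-Finsler manifold with `g_{ij} = η a_{ij}`, `g^{jk} = a^{jk}/η`, the mean
Cartan torsion `I_i = g^{jk} C_{ijk}` satisfies
`I_i = a^{jk} ∂̇_i a_{jk} + n ∂̇_i log η`; in particular each `I_i` is a rational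
function in `y` (regardless of whether `η` is rational in `y`). -/
theorem stmt4 {n : ℕ} (hn : 2 ≤ n) (U : Set (Fin n → ℝ)) (hU : IsOpen U)
    (η : (Fin n → ℝ) → ℝ) (a aInv : Fin n → Fin n → (Fin n → ℝ) → ℝ)
    (I : Fin n → (Fin n → ℝ) → ℝ)
    (hη : ∀ y ∈ U, 0 < η y) (hηd : Differentiable ℝ η)
    (had : ∀ i j, Differentiable ℝ (a i j))
    (ha : ∀ i j, IsRat U (a i j))
    (hasym : ∀ i j, ∀ y ∈ U, a i j y = a j i y)
    (hInv : ∀ y ∈ U, ∀ j k, ∑ i, a j i y * aInv i k y = if j = k then (1:ℝ) else 0)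
    (hCsym : ∀ i j k, ∀ y ∈ U,
      η y * pd i (a j k) y + a j k y * pd i η y
        = η y * pd k (a i j) y + a i j y * pd k η y)
    (hI : ∀ i, ∀ y ∈ U, I i y
      = ∑ j, ∑ k, (aInv j k y / η y) * (η y * pd i (a j k) y + a j k y * pd i η y)) :
    ∀ i, (∀ y ∈ U,
        I i y = (∑ j, ∑ k, aInv j k y * pd i (a j k) y)
          + (n : ℝ) * pd i (fun z => Real.log (η z)) y)
      ∧ IsRat U (I i) := by
  classical
  have haInvRat : ∀ p q, IsRat U (aInv p q) := by
    intro p q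
    rcases U.eq_empty_or_nonempty with hUe | hUne
    · exact ⟨0, 1, one_ne_zero, fun y hy => by
        rw [hUe] at hy; exact absurd hy (Set.notMem_empty y)⟩
    obtain ⟨Pd, Qd, hQd, hPQd⟩ := isRat_det a ha
    obtain ⟨Pa, Qa, hQa, hPQa⟩ := isRat_adjugate a ha p q
    have hBA : ∀ y ∈ U,
        (Matrix.of fun r s => a r s y) * (Matrix.of fun r s => aInv r s y) = 1 := by
      intro y hy
      ext r s
      rw [Matrix.mul_apply, Matrix.one_apply]
      simpa using hInv y hy r s
    have hdet_ne : ∀ y ∈ U, Matrix.det (Matrix.of fun r s => a r s y) ≠ 0 := by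
      intro y hy
      have h := congrArg Matrix.det (hBA y hy)
      rw [Matrix.det_mul, Matrix.det_one] at h
      exact left_ne_zero_of_mul_eq_one h
    have hadj : ∀ y ∈ U, Matrix.adjugate (Matrix.of fun r s => a r s y) p q
        = Matrix.det (Matrix.of fun r s => a r s y) * aInv p q y := by
      intro y hy
      have h1 : Matrix.adjugate (Matrix.of fun r s => a r s y)
          = Matrix.det (Matrix.of fun r s => a r s y) • (Matrix.of fun r s => aInv r s y) := by
        calc Matrix.adjugate (Matrix.of fun r s => a r s y)
            = Matrix.adjugate (Matrix.of fun r s => a r s y) *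
              ((Matrix.of fun r s => a r s y) * (Matrix.of fun r s => aInv r s y)) := by
              rw [hBA y hy, mul_one]
          _ = (Matrix.adjugate (Matrix.of fun r s => a r s y) * (Matrix.of fun r s => a r s y)) *
              (Matrix.of fun r s => aInv r s y) := by rw [mul_assoc]
          _ = (Matrix.det (Matrix.of fun r s => a r s y) • (1 : Matrix (Fin n) (Fin n) ℝ)) *
              (Matrix.of fun r s => aInv r s y) := by rw [Matrix.adjugate_mul]
          _ = Matrix.det (Matrix.of fun r s => a r s y) • (Matrix.of fun r s => aInv r s y) := by
              rw [Matrix.smul_mul, one_mul]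
      have h2 := congrFun (congrFun h1 p) q
      simpa using h2
    have hPd : Pd ≠ 0 := by
      intro h0
      apply hQd
      apply eq_zero_of_eval hU hUne
      intro y hy
      have h := hPQd y hy
      rw [h0, map_zero] at h
      exact (mul_eq_zero.mp h).resolve_left (hdet_ne y hy)
    refine ⟨Pa * Qd, Pd * Qa, mul_ne_zero hPd hQa, fun y hy => ?_⟩
    simp only [map_mul]
    linear_combination (-(aInv p q y) * MvPolynomial.eval y Qa) * hPQd y hy
      + MvPolynomial.eval y Qd * hPQa y hy
      - MvPolynomial.eval y Qd * MvPolynomial.eval y Qa * hadj y hy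
  intro i
  have hSrat : IsRat U (fun y => ∑ j, ∑ k, aInv j k y * pd i (a j k) y) :=
    isRat_sum _ _ fun j _ => isRat_sum _ _ fun k _ =>
      (haInvRat j k).mul (isRat_pd hU (had j k) (ha j k) i)
  have hTrat : IsRat U (fun y => ∑ j, ∑ k, aInv j k y * pd k (a i j) y) :=
    isRat_sum _ _ fun j _ => isRat_sum _ _ fun k _ =>
      (haInvRat j k).mul (isRat_pd hU (had i j) (ha i j) k)
  have hA' : ∀ y ∈ U, (∑ j, ∑ k, aInv j k y * a j k y) = (n : ℝ) := by
    intro y hy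
    have h1 : (∑ j, ∑ k, aInv j k y * a j k y) = ∑ k, ∑ j, a k j y * aInv j k y := by
      rw [Finset.sum_comm]
      exact Finset.sum_congr rfl fun k _ => Finset.sum_congr rfl fun j _ => by
        rw [hasym j k y hy]; ring
    rw [h1]
    have h2 : ∀ k : Fin n, (∑ j, a k j y * aInv j k y) = 1 := fun k => by
      rw [hInv y hy k k]; simp
    simp [h2]
  have hB' : ∀ y ∈ U, (∑ j, ∑ k, aInv j k y * (a i j y * pd k η y)) = pd i η y := by
    intro y hy
    have h1 : (∑ j, ∑ k, aInv j k y * (a i j y * pd k η y))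
        = ∑ k, (∑ j, a i j y * aInv j k y) * pd k η y := by
      rw [Finset.sum_comm]
      refine Finset.sum_congr rfl fun k _ => ?_
      rw [Finset.sum_mul]
      exact Finset.sum_congr rfl fun j _ => by ring
    rw [h1]
    have h2 : ∀ k, (∑ j, a i j y * aInv j k y) = if i = k then (1:ℝ) else 0 :=
      fun k => hInv y hy i k
    simp only [h2, ite_mul, one_mul, zero_mul]
    rw [Finset.sum_ite_eq]
    simp
  have hD : ∀ y ∈ U, I i y = (∑ j, ∑ k, aInv j k y * pd i (a j k) y)
      + (∑ j, ∑ k, aInv j k y * a j k y) * (pd i η y / η y) := by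
    intro y hy
    have hne : η y ≠ 0 := (hη y hy).ne'
    rw [hI i y hy]
    have h1 : ∀ j k : Fin n, (aInv j k y / η y) * (η y * pd i (a j k) y + a j k y * pd i η y)
        = aInv j k y * pd i (a j k) y + (aInv j k y * a j k y) * (pd i η y / η y) := by
      intro j k; field_simp
    calc (∑ j, ∑ k, (aInv j k y / η y) * (η y * pd i (a j k) y + a j k y * pd i η y))
        = ∑ j, ∑ k, (aInv j k y * pd i (a j k) y
            + (aInv j k y * a j k y) * (pd i η y / η y)) :=
          Finset.sum_congr rfl fun j _ => Finset.sum_congr rfl fun k _ => h1 j k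
      _ = (∑ j, ∑ k, aInv j k y * pd i (a j k) y)
          + (∑ j, ∑ k, aInv j k y * a j k y) * (pd i η y / η y) := by
          rw [Finset.sum_mul, ← Finset.sum_add_distrib]
          refine Finset.sum_congr rfl fun j _ => ?_
          rw [Finset.sum_mul, ← Finset.sum_add_distrib]
  have hC : ∀ y ∈ U, η y * (∑ j, ∑ k, aInv j k y * pd i (a j k) y) + (n:ℝ) * pd i η y
      = η y * (∑ j, ∑ k, aInv j k y * pd k (a i j) y) + pd i η y := by
    intro y hy
    have hsum : (∑ j, ∑ k, aInv j k y * (η y * pd i (a j k) y + a j k y * pd i η y))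
        = ∑ j, ∑ k, aInv j k y * (η y * pd k (a i j) y + a i j y * pd k η y) :=
      Finset.sum_congr rfl fun j _ => Finset.sum_congr rfl fun k _ => by
        rw [hCsym i j k y hy]
    have e1 : (∑ j, ∑ k, aInv j k y * (η y * pd i (a j k) y + a j k y * pd i η y))
        = η y * (∑ j, ∑ k, aInv j k y * pd i (a j k) y)
          + (∑ j, ∑ k, aInv j k y * a j k y) * pd i η y := by
      rw [Finset.mul_sum, Finset.sum_mul, ← Finset.sum_add_distrib]
      refine Finset.sum_congr rfl fun j _ => ?_
      rw [Finset.mul_sum, Finset.sum_mul, ← Finset.sum_add_distrib]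
      exact Finset.sum_congr rfl fun k _ => by ring
    have e2 : (∑ j, ∑ k, aInv j k y * (η y * pd k (a i j) y + a i j y * pd k η y))
        = η y * (∑ j, ∑ k, aInv j k y * pd k (a i j) y)
          + (∑ j, ∑ k, aInv j k y * (a i j y * pd k η y)) := by
      rw [Finset.mul_sum, ← Finset.sum_add_distrib]
      refine Finset.sum_congr rfl fun j _ => ?_
      rw [Finset.mul_sum, ← Finset.sum_add_distrib]
      exact Finset.sum_congr rfl fun k _ => by ring
    have h := hsum
    rw [e1, e2, hA' y hy, hB' y hy] at h
    linarith [h]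
  have hlog : ∀ y ∈ U, pd i (fun z => Real.log (η z)) y = pd i η y / η y := by
    intro y hy
    have hne : η y ≠ 0 := (hη y hy).ne'
    have h1 : HasFDerivAt (fun z => Real.log (η z)) ((η y)⁻¹ • fderiv ℝ η y) y :=
      (Real.hasDerivAt_log hne).comp_hasFDerivAt y (hηd y).hasFDerivAt
    unfold pd
    rw [h1.fderiv]
    simp [div_eq_inv_mul]
  refine ⟨fun y hy => ?_, ?_⟩
  · rw [hlog y hy]
    have h := hD y hy
    rw [hA' y hy] at h
    exact h
  · have hn1 : ((n:ℝ) - 1) ≠ 0 := by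
      have h2 : (2:ℝ) ≤ (n:ℝ) := by exact_mod_cast hn
      linarith
    have hfin : ∀ y ∈ U, (∑ j, ∑ k, aInv j k y * pd i (a j k) y)
        + ((n:ℝ)/((n:ℝ)-1)) * ((∑ j, ∑ k, aInv j k y * pd k (a i j) y)
          - (∑ j, ∑ k, aInv j k y * pd i (a j k) y)) = I i y := by
      intro y hy
      have hne : η y ≠ 0 := (hη y hy).ne'
      have hc := hC y hy
      have hd := hD y hy
      rw [hA' y hy] at hd
      rw [hd]
      have h5 : pd i η y / η y = ((∑ j, ∑ k, aInv j k y * pd k (a i j) y)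
          - (∑ j, ∑ k, aInv j k y * pd i (a j k) y)) / ((n:ℝ)-1) := by
        rw [div_eq_div_iff hne hn1]
        linear_combination hc
      rw [h5]
      ring
    exact ((hSrat.add ((isRat_const ((n:ℝ)/((n:ℝ)-1))).mul (hTrat.sub hSrat)))).congr hfin
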